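/- The weight-restricted de Bruijn graph D(q, ℓ; q*, [w₁, w₂]) is strongly connected, and hence Eulerian. -/

import Mathlib

/-- Prefix of length `L` of an `(L+1)`-gram. -/
def pre (q L : ℕ) (z : Fin (L + 1) → Fin q) : Fin L → Fin q := fun i => z i.castSucc

/-- Suffix of length `L` of an `(L+1)`-gram. -/
def suf (q L : ℕ) (z : Fin (L + 1) → Fin q) : Fin L → Fin q := fun i => z i.succ

/-- The `q*`-weight of a word: the number of symbols lying in `[q-q*, q-1]`. -/
def wtq (q L qs : ℕ) (x : Fin L → Fin q) : ℕ :=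
  (Finset.univ.filter (fun i : Fin L => q - qs ≤ (x i : ℕ))).card

/-- Arc set of the weight-restricted de Bruijn graph. -/
def Sgram (q L qs w₁ w₂ : ℕ) : Finset (Fin (L + 1) → Fin q) :=
  Finset.univ.filter (fun z => w₁ ≤ wtq q (L + 1) qs z ∧ wtq q (L + 1) qs z ≤ w₂)

/-- Node set of the restricted de Bruijn graph. -/
def VS (q L : ℕ) (S : Finset (Fin (L + 1) → Fin q)) : Finset (Fin L → Fin q) :=
  S.image (pre q L) ∪ S.image (suf q L)

/-- Arc relation of `D(S)`. -/
def step (q L : ℕ) (S : Finset (Fin (L + 1) → Fin q)) (a b : Fin L → Fin q) : Prop :=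
  ∃ z ∈ S, pre q L z = a ∧ suf q L z = b


section Euler

variable {A V : Type*} [DecidableEq A] [DecidableEq V] (src tgt : A → V)

lemma exists_path : ∀ (n : ℕ) (T : Finset A), T.card ≤ n → ∀ u v : V, u ≠ v →
    (∀ w, (T.filter (fun e => src e = w)).card + (if w = v then 1 else 0)
        = (T.filter (fun e => tgt e = w)).card + (if w = u then 1 else 0)) →
    ∃ l : List A, l ≠ [] ∧ l.Nodup ∧ (∀ e ∈ l, e ∈ T) ∧
      l.Chain' (fun a b => tgt a = src b) ∧
      ∀ h : l ≠ [], src (l.head h) = u ∧ tgt (l.getLast h) = v := by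
  intro n
  induction n with
  | zero =>
      intro T hT u v huv hdeg
      exfalso
      have hT0 : T = ∅ := Finset.card_eq_zero.mp (Nat.le_zero.mp hT)
      have h := hdeg u
      rw [hT0] at h
      simp [huv] at h
  | succ n ih =>
      intro T hT u v huv hdeg
      have hpos : 0 < (T.filter (fun e => src e = u)).card := by
        have h := hdeg u
        rw [if_neg huv, if_pos rfl] at h
        omega
      obtain ⟨e, he⟩ := Finset.card_pos.mp hpos
      have heT : e ∈ T := (Finset.mem_filter.mp he).1
      have hesrc : src e = u := (Finset.mem_filter.mp he).2
      by_cases htv : tgt e = v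
      · exact ⟨[e], by simp, by simp, by simp [heT], List.isChain_singleton _,
          fun _ => by simp [hesrc, htv]⟩
      · have hTpos : 0 < T.card := Finset.card_pos.mpr ⟨e, heT⟩
        have hcard : (T.erase e).card ≤ n := by
          have h := Finset.card_erase_of_mem heT
          omega
        have hdeg' : ∀ w, ((T.erase e).filter (fun f => src f = w)).card + (if w = v then 1 else 0)
            = ((T.erase e).filter (fun f => tgt f = w)).card + (if w = tgt e then 1 else 0) := by
          intro w
          have h1 : ((T.erase e).filter (fun f => src f = w)).card
              = (T.filter (fun f => src f = w)).card - (if w = u then 1 else 0) := by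
            rw [Finset.filter_erase]
            by_cases h : w = u
            · rw [Finset.card_erase_of_mem (Finset.mem_filter.mpr ⟨heT, by rw [hesrc, h]⟩)]
              simp [h]
            · rw [Finset.erase_eq_of_notMem (by simp; intro _ h'; exact h (by rw [← h', hesrc]))]
              simp [h]
          have h2 : ((T.erase e).filter (fun f => tgt f = w)).card
              = (T.filter (fun f => tgt f = w)).card - (if w = tgt e then 1 else 0) := by
            rw [Finset.filter_erase]
            by_cases h : w = tgt e
            · rw [Finset.card_erase_of_mem (Finset.mem_filter.mpr ⟨heT, h.symm⟩)]
              simp [h]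
            · rw [Finset.erase_eq_of_notMem (by simp; intro _ h'; exact h h'.symm)]
              simp [h]
          have hA : (if w = u then 1 else 0) ≤ (T.filter (fun f => src f = w)).card := by
            by_cases h : w = u
            · simp only [if_pos h]
              exact Finset.card_pos.mpr ⟨e, Finset.mem_filter.mpr ⟨heT, by rw [hesrc, h]⟩⟩
            · simp [h]
          have hB : (if w = tgt e then 1 else 0) ≤ (T.filter (fun f => tgt f = w)).card := by
            by_cases h : w = tgt e
            · simp only [if_pos h]
              exact Finset.card_pos.mpr ⟨e, Finset.mem_filter.mpr ⟨heT, h.symm⟩⟩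
            · simp [h]
          have h3 := hdeg w
          rw [h1, h2]
          by_cases hwu : w = u <;> by_cases hwv : w = v <;> by_cases hwt : w = tgt e <;>
            simp only [if_pos, if_neg, hwu, hwv, hwt, if_true, if_false] at h3 hA hB ⊢ <;>
            omega
        obtain ⟨l, hlne, hlnd, hlT, hlch, hlhl⟩ :=
          ih (T.erase e) hcard (tgt e) v htv hdeg'
        refine ⟨e :: l, by simp, ?_, ?_, ?_, ?_⟩
        · refine List.nodup_cons.mpr ⟨fun hmem => ?_, hlnd⟩
          exact (Finset.ne_of_mem_erase (hlT e hmem)) rfl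
        · intro f hf
          rcases List.mem_cons.mp hf with h | h
          · exact h ▸ heT
          · exact Finset.mem_of_mem_erase (hlT f h)
        · refine List.isChain_cons.mpr ⟨?_, hlch⟩
          intro y hy
          have : y = l.head hlne := by
            cases l with
            | nil => exact absurd rfl hlne
            | cons a t => simp at hy; simp [hy]
          rw [this, (hlhl hlne).1]
        · intro h
          constructor
          · simp [hesrc]
          · rw [List.getLast_cons hlne]
            exact (hlhl hlne).2

end Euler

section Euler2

variable {A V : Type*} [DecidableEq A] [DecidableEq V] (src tgt : A → V)

/-- From a balanced digraph and an arc `e`, get a nonempty closed trail based at `src e`. -/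
lemma closed_from (T : Finset A)
    (bal : ∀ w, (T.filter (fun f => src f = w)).card = (T.filter (fun f => tgt f = w)).card)
    (e : A) (heT : e ∈ T) :
    ∃ l : List A, l ≠ [] ∧ l.Nodup ∧ (∀ f ∈ l, f ∈ T) ∧
      l.Chain' (fun a b => tgt a = src b) ∧
      ∀ h : l ≠ [], src (l.head h) = src e ∧ tgt (l.getLast h) = src e := by
  by_cases hte : tgt e = src e
  · exact ⟨[e], by simp, by simp, by simp [heT], List.isChain_singleton _, fun _ => by simp [hte]⟩
  · have hdeg : ∀ w, ((T.erase e).filter (fun f => src f = w)).card + (if w = src e then 1 else 0)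
        = ((T.erase e).filter (fun f => tgt f = w)).card + (if w = tgt e then 1 else 0) := by
      intro w
      have h1 : ((T.erase e).filter (fun f => src f = w)).card
          = (T.filter (fun f => src f = w)).card - (if w = src e then 1 else 0) := by
        rw [Finset.filter_erase]
        by_cases h : w = src e
        · rw [Finset.card_erase_of_mem (Finset.mem_filter.mpr ⟨heT, h.symm⟩)]; simp [h]
        · rw [Finset.erase_eq_of_notMem (by simp; intro _ h'; exact h h'.symm)]; simp [h]
      have h2 : ((T.erase e).filter (fun f => tgt f = w)).card
          = (T.filter (fun f => tgt f = w)).card - (if w = tgt e then 1 else 0) := by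
        rw [Finset.filter_erase]
        by_cases h : w = tgt e
        · rw [Finset.card_erase_of_mem (Finset.mem_filter.mpr ⟨heT, h.symm⟩)]; simp [h]
        · rw [Finset.erase_eq_of_notMem (by simp; intro _ h'; exact h h'.symm)]; simp [h]
      have hA : (if w = src e then 1 else 0) ≤ (T.filter (fun f => src f = w)).card := by
        by_cases h : w = src e
        · simp only [if_pos h]
          exact Finset.card_pos.mpr ⟨e, Finset.mem_filter.mpr ⟨heT, h.symm⟩⟩
        · simp [h]
      have hB : (if w = tgt e then 1 else 0) ≤ (T.filter (fun f => tgt f = w)).card := by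
        by_cases h : w = tgt e
        · simp only [if_pos h]
          exact Finset.card_pos.mpr ⟨e, Finset.mem_filter.mpr ⟨heT, h.symm⟩⟩
        · simp [h]
      have h3 := bal w
      rw [h1, h2]
      rcases eq_or_ne w (src e) with rfl | hws
      · simp only [if_pos rfl, if_neg (show ¬ src e = tgt e from fun h => hte h.symm)]
          at h1 h2 hA hB ⊢
        omega
      · rcases eq_or_ne w (tgt e) with rfl | hwt
        · simp only [if_pos rfl, if_neg hws] at h1 h2 hA hB ⊢
          omega
        · simp only [if_neg hws, if_neg hwt] at h1 h2 hA hB ⊢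
          omega
    obtain ⟨l, hlne, hlnd, hlT, hlch, hlhl⟩ :=
      exists_path src tgt (T.erase e).card (T.erase e) le_rfl (tgt e) (src e) hte hdeg
    refine ⟨e :: l, by simp, ?_, ?_, ?_, ?_⟩
    · refine List.nodup_cons.mpr ⟨fun hmem => ?_, hlnd⟩
      exact (Finset.ne_of_mem_erase (hlT e hmem)) rfl
    · intro f hf
      rcases List.mem_cons.mp hf with h | h
      · exact h ▸ heT
      · exact Finset.mem_of_mem_erase (hlT f h)
    · refine List.isChain_cons.mpr ⟨?_, hlch⟩
      intro y hy
      have : y = l.head hlne := by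
        cases l with
        | nil => exact absurd rfl hlne
        | cons a t => simp at hy; simp [hy]
      rw [this, (hlhl hlne).1]
    · intro h
      refine ⟨by simp, ?_⟩
      rw [List.getLast_cons hlne]
      exact (hlhl hlne).2

/-- For a chain, the list of targets is the tail of sources plus the final target. -/
lemma map_tgt_eq (l : List A) (hl : l ≠ []) (hch : l.Chain' (fun a b => tgt a = src b)) :
    l.map tgt = (l.map src).tail ++ [tgt (l.getLast hl)] := by
  induction l with
  | nil => exact absurd rfl hl
  | cons a t ih =>
      cases t with
      | nil => simp
      | cons b t' =>
          have hch' : (b :: t').Chain' (fun a b => tgt a = src b) :=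
            (List.isChain_cons_cons.mp hch).2
          have hab : tgt a = src b := (List.isChain_cons_cons.mp hch).1
          have := ih (by simp) hch'
          simp only [List.map_cons, List.tail_cons] at this ⊢
          rw [List.getLast_cons (by simp : (b :: t') ≠ [])]
          rw [this, hab]
          simp

/-- Count of sources equals count of targets along a closed chain. -/
lemma closed_count (l : List A) (hl : l ≠ []) (hch : l.Chain' (fun a b => tgt a = src b))
    (hcl : tgt (l.getLast hl) = src (l.head hl)) (p : V → Prop) [DecidablePred p] :
    (l.countP (fun e => p (src e))) = (l.countP (fun e => p (tgt e))) := by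
  have h1 : l.countP (fun e => p (src e)) = (l.map src).countP p := by
    rw [List.countP_map]; rfl
  have h2 : l.countP (fun e => p (tgt e)) = (l.map tgt).countP p := by
    rw [List.countP_map]; rfl
  rw [h1, h2, map_tgt_eq src tgt l hl hch, hcl]
  have : l.map src = src (l.head hl) :: (l.map src).tail := by
    cases l with
    | nil => exact absurd rfl hl
    | cons a t => simp
  conv_lhs => rw [this]
  simp [List.countP_append, List.countP_cons]
  try omega

end Euler2

section Euler3

variable {A V : Type*} [DecidableEq A] [DecidableEq V] (src tgt : A → V)

lemma cross_lemma (S : Finset A) (P : V → Prop) (a b : V)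
    (hab : Relation.ReflTransGen (fun a b => ∃ z ∈ S, src z = a ∧ tgt z = b) a b)
    (hPa : P a) (hPb : ¬ P b) : ∃ f ∈ S, P (src f) ∧ ¬ P (tgt f) := by
  revert hPa
  induction hab using Relation.ReflTransGen.head_induction_on with
  | refl => exact fun h => absurd h hPb
  | @head a' c' hr ht ih =>
      intro hPa
      obtain ⟨z, hzS, hz1, hz2⟩ := hr
      by_cases hPc : P c'
      · exact ih hPc
      · exact ⟨z, hzS, hz1.symm ▸ hPa, fun h => hPc (hz2 ▸ h)⟩

lemma rotate_closed (R : A → A → Prop) (c₁ c₂ : List A) (e₀ : A)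
    (hch : (c₁ ++ e₀ :: c₂).Chain' R)
    (hcl : R ((c₁ ++ e₀ :: c₂).getLast (by simp)) ((c₁ ++ e₀ :: c₂).head (by simp))) :
    ((e₀ :: c₂) ++ c₁).Chain' R ∧
      R (((e₀ :: c₂) ++ c₁).getLast (by simp)) (((e₀ :: c₂) ++ c₁).head (by simp)) := by
  rcases List.eq_nil_or_concat c₁ with rfl | _
  · simpa using ⟨hch, hcl⟩
  · have hc₁ : c₁ ≠ [] := by rintro rfl; simp_all
    obtain ⟨h1, h2, h3⟩ := List.isChain_append.mp hch
    have hlast : (c₁ ++ e₀ :: c₂).getLast (by simp) = (e₀ :: c₂).getLast (by simp) := by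
      rw [List.getLast_append]
      simp
    have hhead : (c₁ ++ e₀ :: c₂).head (by simp) = c₁.head hc₁ := by
      rw [List.head_append]
      simp [hc₁]
    constructor
    · refine List.isChain_append.mpr ⟨h2, h1, ?_⟩
      intro x hx y hy
      rw [List.getLast?_eq_getLast (by simp), Option.mem_def, Option.some.injEq] at hx
      rw [List.head?_eq_head hc₁, Option.mem_def, Option.some.injEq] at hy
      rw [← hx, ← hy]
      rw [hlast, hhead] at hcl
      exact hcl
    · have hl2 : ((e₀ :: c₂) ++ c₁).getLast (by simp) = c₁.getLast hc₁ := by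
        rw [List.getLast_append]
        simp [hc₁]
      have hh2 : ((e₀ :: c₂) ++ c₁).head (by simp) = e₀ := rfl
      rw [hl2, hh2]
      have := h3 (c₁.getLast hc₁) (by rw [List.getLast?_eq_getLast hc₁]; rfl)
        e₀ (by simp)
      exact this

lemma euler_grow : ∀ (k : ℕ) (S : Finset A)
    (_ : ∀ w, (S.filter (fun e => src e = w)).card = (S.filter (fun e => tgt e = w)).card)
    (_ : ∀ e ∈ S, ∀ f ∈ S, Relation.ReflTransGen
        (fun a b => ∃ z ∈ S, src z = a ∧ tgt z = b) (tgt e) (src f))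
    (c : List A) (hcne : c ≠ []) (_ : c.Nodup) (_ : ∀ e ∈ c, e ∈ S)
    (_ : c.Chain' (fun a b => tgt a = src b))
    (_ : tgt (c.getLast hcne) = src (c.head hcne)),
    S.card ≤ c.length + k →
    ∃ c' : List A, (∀ z, z ∈ c' ↔ z ∈ S) ∧ c'.Nodup ∧
      c'.Chain' (fun a b => tgt a = src b) ∧
      ∀ h : c' ≠ [], tgt (c'.getLast h) = src (c'.head h) := by
  intro k
  induction k with
  | zero =>
      intro S bal conn c hcne hnd hsub hch hcl hlen
      refine ⟨c, fun z => ⟨hsub z, fun hz => ?_⟩, hnd, hch, fun h => hcl⟩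
      have hsubF : c.toFinset ⊆ S := fun x hx => hsub x (List.mem_toFinset.mp hx)
      have hEq : c.toFinset = S :=
        Finset.eq_of_subset_of_card_le (s := c.toFinset) (t := S) hsubF
          (by rw [List.toFinset_card_of_nodup hnd]; simpa using hlen)
      rw [← hEq] at hz
      exact List.mem_toFinset.mp hz
  | succ k ih =>
      intro S bal conn c hcne hnd hsub hch hcl hlen
      by_cases hcov : ∀ e ∈ S, e ∈ c
      · exact ⟨c, fun z => ⟨hsub z, hcov z⟩, hnd, hch, fun h => hcl⟩
      push_neg at hcov
      obtain ⟨g, hgS, hgc⟩ := hcov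
      set S' : Finset A := S \ c.toFinset with hS'def
      have hgS' : g ∈ S' := Finset.mem_sdiff.mpr ⟨hgS, fun h => hgc (List.mem_toFinset.mp h)⟩
      have hcount : ∀ (p : A → Prop) [DecidablePred p],
          (S.filter p).card = (S'.filter p).card + c.countP (fun e => decide (p e)) := by
        intro p _
        have hsubF : c.toFinset ⊆ S := fun x hx => hsub x (List.mem_toFinset.mp hx)
        have hU : S' ∪ c.toFinset = S := Finset.sdiff_union_of_subset hsubF
        have hdisj : Disjoint (S'.filter p) (c.toFinset.filter p) :=
          Finset.disjoint_filter_filter (Finset.sdiff_disjoint)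
        have : S.filter p = (S'.filter p) ∪ (c.toFinset.filter p) := by
          rw [← Finset.filter_union, hU]
        rw [this, Finset.card_union_of_disjoint hdisj]
        congr 1
        have hto : Finset.filter p c.toFinset = (List.filter (fun e => decide (p e)) c).toFinset := by
          ext x
          simp [List.mem_filter]
        rw [hto, List.toFinset_card_of_nodup (hnd.filter _), List.countP_eq_length_filter]
      have hb : ∀ w, (S'.filter (fun e => src e = w)).card
          = (S'.filter (fun e => tgt e = w)).card := by
        intro w
        have h1 := hcount (fun e => src e = w)
        have h2 := hcount (fun e => tgt e = w)
        have h3 := closed_count src tgt c hcne hch hcl (fun v => v = w)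
        have h4 := bal w
        have h5 : c.countP (fun e => decide (src e = w)) = c.countP (fun e => decide (tgt e = w)) := by
          simpa [eq_comm] using h3
        omega
      have hgood : ∃ f ∈ S', ∃ e ∈ c, src f = src e := by
        by_contra hng
        push_neg at hng
        have htgt : ∀ f ∈ S', ∀ e ∈ c, tgt f ≠ src e := by
          intro f hf e he heq
          have h1 : 0 < (S'.filter (fun x => tgt x = src e)).card :=
            Finset.card_pos.mpr ⟨f, Finset.mem_filter.mpr ⟨hf, heq⟩⟩
          have h2 : (S'.filter (fun x => src x = src e)).card = 0 := by
            rw [Finset.card_eq_zero, Finset.filter_eq_empty_iff]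
            intro x hx
            exact hng x hx e he
          rw [hb (src e)] at h2
          omega
        have hPa : (fun v => ∀ e ∈ c, v ≠ src e) (tgt g) := htgt g hgS'
        have hPb : ¬ (fun v => ∀ e ∈ c, v ≠ src e) (src (c.head hcne)) := by
          intro hP
          exact hP (c.head hcne) (List.head_mem hcne) rfl
        have hrtg := conn g hgS (c.head hcne) (hsub _ (List.head_mem hcne))
        obtain ⟨f, hfS, hPf, hPtf⟩ :=
          cross_lemma src tgt S (fun v => ∀ e ∈ c, v ≠ src e) _ _ hrtg hPa hPb
        have hfc : f ∉ c := fun hf => hPf f hf rfl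
        have hfS' : f ∈ S' := Finset.mem_sdiff.mpr ⟨hfS, fun h => hfc (List.mem_toFinset.mp h)⟩
        push_neg at hPtf
        obtain ⟨e, hec, heq⟩ := hPtf
        exact htgt f hfS' e hec heq
      obtain ⟨f, hfS', e₀, he₀c, hfe₀⟩ := hgood
      obtain ⟨d, hdne, hdnd, hdS', hdch, hdhl⟩ := closed_from src tgt S' hb f hfS'
      obtain ⟨c₁, c₂, rfl⟩ := List.append_of_mem he₀c
      obtain ⟨hrch, hrcl⟩ := rotate_closed (fun a b => tgt a = src b) c₁ c₂ e₀ hch hcl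
      set crot : List A := (e₀ :: c₂) ++ c₁ with hcrotdef
      have hcrotne : crot ≠ [] := by simp [hcrotdef]
      have hperm : (c₁ ++ e₀ :: c₂).Perm crot := List.perm_append_comm
      -- new closed trail
      have hdisj : ∀ x ∈ d, x ∉ crot := by
        intro x hx hxc
        have hxS' : x ∈ S' := hdS' x hx
        have hxc' : x ∈ c₁ ++ e₀ :: c₂ := hperm.symm.subset hxc
        exact (Finset.mem_sdiff.mp hxS').2 (List.mem_toFinset.mpr hxc')
      have hc'nd : (d ++ crot).Nodup := by
        rw [List.nodup_append]
        exact ⟨hdnd, hperm.nodup_iff.mp hnd, fun a ha b hb hab => hdisj a ha (hab ▸ hb)⟩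
      have hc'sub : ∀ x ∈ d ++ crot, x ∈ S := by
        intro x hx
        rcases List.mem_append.mp hx with h | h
        · exact Finset.mem_sdiff.mp (hdS' x h) |>.1
        · exact hsub x (hperm.symm.subset h)
      have hseam : tgt (d.getLast hdne) = src (crot.head hcrotne) := by
        have h1 : crot.head hcrotne = e₀ := rfl
        rw [h1, (hdhl hdne).2, hfe₀]
      have hc'ch : (d ++ crot).Chain' (fun a b => tgt a = src b) := by
        refine List.isChain_append.mpr ⟨hdch, hrch, ?_⟩
        intro x hx y hy
        rw [List.getLast?_eq_getLast hdne, Option.mem_def, Option.some.injEq] at hx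
        rw [List.head?_eq_head hcrotne, Option.mem_def, Option.some.injEq] at hy
        rw [← hx, ← hy]; exact hseam
      have hc'ne : d ++ crot ≠ [] := by simp [hdne]
      have hc'cl : tgt ((d ++ crot).getLast hc'ne) = src ((d ++ crot).head hc'ne) := by
        have h1 : (d ++ crot).getLast hc'ne = crot.getLast hcrotne := by
          rw [List.getLast_append]; simp [hcrotne]
        have h2 : (d ++ crot).head hc'ne = d.head hdne := by
          rw [List.head_append]; simp [hdne]
        rw [h1, h2, hrcl]
        have : crot.head hcrotne = e₀ := rfl
        rw [this, (hdhl hdne).1, hfe₀]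
      have hlen' : S.card ≤ (d ++ crot).length + k := by
        have : (c₁ ++ e₀ :: c₂).length = crot.length := hperm.length_eq
        have hd1 : 1 ≤ d.length := List.length_pos_iff.mpr hdne
        simp only [List.length_append] at *
        omega
      exact ih S bal conn (d ++ crot) hc'ne hc'nd hc'sub hc'ch hc'cl hlen'

theorem euler_main (S : Finset A)
    (bal : ∀ w, (S.filter (fun e => src e = w)).card = (S.filter (fun e => tgt e = w)).card)
    (conn : ∀ e ∈ S, ∀ f ∈ S, Relation.ReflTransGen
        (fun a b => ∃ z ∈ S, src z = a ∧ tgt z = b) (tgt e) (src f)) :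
    ∃ c : List A, (∀ z, z ∈ c ↔ z ∈ S) ∧ c.Nodup ∧
      c.Chain' (fun a b => tgt a = src b) ∧
      ∀ h : c ≠ [], tgt (c.getLast h) = src (c.head h) := by
  rcases S.eq_empty_or_nonempty with rfl | ⟨e, heS⟩
  · exact ⟨[], by simp, by simp, List.isChain_nil, fun h => absurd rfl h⟩
  · obtain ⟨c, hcne, hcnd, hcsub, hcch, hchl⟩ := closed_from src tgt S bal e heS
    have hcl : tgt (c.getLast hcne) = src (c.head hcne) := by
      rw [(hchl hcne).2, (hchl hcne).1]
    exact euler_grow src tgt S.card S bal conn c hcne hcnd hcsub hcch hcl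
      (by omega)

end Euler3

/-! ### Weight bookkeeping -/

/-- Indicator that a symbol value is heavy. -/
def hvn (q qs s : ℕ) : ℕ := if q - qs ≤ s then 1 else 0

/-- Weight of the suffix of `x` starting at position `k`. -/
def swt (q L qs : ℕ) (x : Fin L → Fin q) (k : ℕ) : ℕ :=
  ∑ i ∈ Finset.univ.filter (fun i : Fin L => k ≤ (i : ℕ)), hvn q qs (x i)

/-- Weight of the prefix of `x` of length `k`. -/
def pwt (q L qs : ℕ) (x : Fin L → Fin q) (k : ℕ) : ℕ :=
  ∑ i ∈ Finset.univ.filter (fun i : Fin L => (i : ℕ) < k), hvn q qs (x i)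

/-- The intermediate node obtained after feeding the first `k` symbols of `y`
after the node `x`. -/
def mixw (q L : ℕ) (hL : 0 < L) (x y : Fin L → Fin q) (k : ℕ) : Fin L → Fin q :=
  fun j => if h : (j : ℕ) + k < L then x ⟨(j : ℕ) + k, h⟩
    else y ⟨((j : ℕ) + k - L) % L, Nat.mod_lt _ hL⟩

/-- The canonical 0/(q-1)-word whose prefix-weight profile is `f`. -/
def Wd (q L : ℕ) (hq : 0 < q) (f : ℕ → ℕ) : Fin L → Fin q :=
  fun i => if f ((i : ℕ) + 1) = f (i : ℕ) + 1 then ⟨q - 1, by omega⟩ else ⟨0, hq⟩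

section WtLemmas

variable {q L qs : ℕ}

lemma hvn_le (s : ℕ) : hvn q qs s ≤ 1 := by
  unfold hvn; split <;> omega

lemma wtq_eq_sum (n : ℕ) (x : Fin n → Fin q) :
    wtq q n qs x = ∑ i : Fin n, hvn q qs (x i) := by
  unfold wtq hvn
  rw [Finset.card_filter]

lemma wtq_snoc (x : Fin L → Fin q) (s : Fin q) :
    wtq q (L + 1) qs (Fin.snoc x s) = wtq q L qs x + hvn q qs s := by
  rw [wtq_eq_sum, wtq_eq_sum, Fin.sum_univ_castSucc]
  simp [Fin.snoc_castSucc, Fin.snoc_last]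

lemma wtq_cons (x : Fin L → Fin q) (s : Fin q) :
    wtq q (L + 1) qs (Fin.cons s x) = hvn q qs s + wtq q L qs x := by
  rw [wtq_eq_sum, wtq_eq_sum, Fin.sum_univ_succ]
  simp [Fin.cons_succ, Fin.cons_zero]

lemma pwt_zero (x : Fin L → Fin q) : pwt q L qs x 0 = 0 := by
  unfold pwt
  rw [Finset.filter_false_of_mem (by intro i _; omega)]
  simp

lemma pwt_ge (x : Fin L → Fin q) {k : ℕ} (hk : L ≤ k) : pwt q L qs x k = wtq q L qs x := by
  unfold pwt
  rw [wtq_eq_sum, Finset.filter_true_of_mem (by intro i _; exact lt_of_lt_of_le i.isLt hk)]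

lemma swt_ge (x : Fin L → Fin q) {k : ℕ} (hk : L ≤ k) : swt q L qs x k = 0 := by
  unfold swt
  rw [Finset.filter_false_of_mem (by intro i _ h; exact absurd (lt_of_lt_of_le i.isLt hk) (by omega))]
  simp

lemma pwt_succ (x : Fin L → Fin q) {k : ℕ} (hk : k < L) :
    pwt q L qs x (k + 1) = pwt q L qs x k + hvn q qs (x ⟨k, hk⟩) := by
  unfold pwt
  have h : (Finset.univ.filter (fun i : Fin L => (i : ℕ) < k + 1))
      = insert (⟨k, hk⟩ : Fin L) (Finset.univ.filter (fun i : Fin L => (i : ℕ) < k)) := by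
    ext i
    simp only [Finset.mem_filter, Finset.mem_univ, true_and, Finset.mem_insert,
      Fin.ext_iff, Fin.val_mk]
    omega
  rw [h, Finset.sum_insert (by simp)]
  ring

lemma swt_succ (x : Fin L → Fin q) {k : ℕ} (hk : k < L) :
    swt q L qs x k = hvn q qs (x ⟨k, hk⟩) + swt q L qs x (k + 1) := by
  unfold swt
  have h : (Finset.univ.filter (fun i : Fin L => k ≤ (i : ℕ)))
      = insert (⟨k, hk⟩ : Fin L) (Finset.univ.filter (fun i : Fin L => k + 1 ≤ (i : ℕ))) := by
    ext i
    simp only [Finset.mem_filter, Finset.mem_univ, true_and, Finset.mem_insert,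
      Fin.ext_iff, Fin.val_mk]
    omega
  rw [h, Finset.sum_insert (by simp)]

lemma pwt_add_swt (x : Fin L → Fin q) (k : ℕ) :
    pwt q L qs x k + swt q L qs x k = wtq q L qs x := by
  unfold pwt swt
  rw [wtq_eq_sum, ← Finset.sum_filter_add_sum_filter_not Finset.univ (fun i : Fin L => (i : ℕ) < k)]
  congr 1
  apply Finset.sum_congr _ (fun _ _ => rfl)
  apply Finset.filter_congr
  intro i _
  simp only [not_lt]

lemma pwt_le (x : Fin L → Fin q) (k : ℕ) : pwt q L qs x k ≤ k := by
  unfold pwt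
  calc ∑ i ∈ Finset.univ.filter (fun i : Fin L => (i : ℕ) < k), hvn q qs (x i)
      ≤ ∑ _i ∈ Finset.univ.filter (fun i : Fin L => (i : ℕ) < k), 1 :=
        Finset.sum_le_sum (fun i _ => hvn_le _)
    _ = (Finset.univ.filter (fun i : Fin L => (i : ℕ) < k)).card := by simp
    _ ≤ (Finset.range k).card :=
        Finset.card_le_card_of_injOn (fun i => (i : ℕ))
          (fun i hi => by
            simp only [Finset.mem_coe, Finset.mem_filter] at hi
            simpa using hi.2)
          (fun a _ b _ h => Fin.ext h)
    _ = k := Finset.card_range k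

lemma pwt_step (x : Fin L → Fin q) (k : ℕ) :
    pwt q L qs x k ≤ pwt q L qs x (k + 1) ∧ pwt q L qs x (k + 1) ≤ pwt q L qs x k + 1 := by
  rcases Nat.lt_or_ge k L with hk | hk
  · rw [pwt_succ x hk]
    have := hvn_le (q := q) (qs := qs) ((x ⟨k, hk⟩ : Fin q) : ℕ)
    omega
  · rw [pwt_ge x hk, pwt_ge x (by omega)]
    omega

lemma swt_step (x : Fin L → Fin q) (k : ℕ) :
    swt q L qs x (k + 1) ≤ swt q L qs x k ∧ swt q L qs x k ≤ swt q L qs x (k + 1) + 1 := by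
  rcases Nat.lt_or_ge k L with hk | hk
  · rw [swt_succ x hk]
    have := hvn_le (q := q) (qs := qs) ((x ⟨k, hk⟩ : Fin q) : ℕ)
    omega
  · rw [swt_ge x hk, swt_ge x (by omega)]
    omega

end WtLemmas

section MixLemmas

variable {q L qs w₁ w₂ : ℕ}

lemma pre_snoc (u : Fin L → Fin q) (s : Fin q) : pre q L (Fin.snoc u s) = u := by
  funext j
  simp [pre, Fin.snoc_castSucc]

lemma cons_head_suf (z : Fin (L + 1) → Fin q) : Fin.cons (z 0) (suf q L z) = z := by
  funext i
  cases i using Fin.cases with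
  | zero => simp
  | succ j => simp [suf, Fin.cons_succ]

lemma mixw_zero (hL : 0 < L) (x y : Fin L → Fin q) : mixw q L hL x y 0 = x := by
  funext j
  simp [mixw]

lemma mixw_L (hL : 0 < L) (x y : Fin L → Fin q) : mixw q L hL x y L = y := by
  funext j
  have h1 : ¬ ((j : ℕ) + L < L) := by omega
  have h2 : ((j : ℕ) + L - L) % L = (j : ℕ) := by
    have : (j : ℕ) + L - L = (j : ℕ) := by omega
    rw [this, Nat.mod_eq_of_lt j.isLt]
  simp only [mixw, dif_neg h1]
  congr 1
  exact Fin.ext h2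

lemma mixw_suf (hL : 0 < L) (x y : Fin L → Fin q) {k : ℕ} (hk : k < L) :
    suf q L (Fin.snoc (mixw q L hL x y k) (y ⟨k, hk⟩)) = mixw q L hL x y (k + 1) := by
  funext j
  simp only [suf]
  rcases Nat.lt_or_ge ((j : ℕ) + 1) L with h | h
  · have hcast : (j.succ : Fin (L + 1)) = ((⟨(j : ℕ) + 1, h⟩ : Fin L)).castSucc := by
      apply Fin.ext
      simp
    rw [hcast, Fin.snoc_castSucc]
    show mixw q L hL x y k ⟨(j : ℕ) + 1, h⟩ = mixw q L hL x y (k + 1) j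
    unfold mixw
    rcases Nat.lt_or_ge ((j : ℕ) + 1 + k) L with h' | h'
    · rw [dif_pos h', dif_pos (by omega : (j : ℕ) + (k + 1) < L)]
      congr 1
      apply Fin.ext
      simp only [Fin.val_mk]
      omega
    · rw [dif_neg (show ¬ (((⟨(j : ℕ) + 1, h⟩ : Fin L) : ℕ) + k < L) by
          simp only [Fin.val_mk]; omega),
        dif_neg (show ¬ ((j : ℕ) + (k + 1) < L) by omega)]
      congr 1
      apply Fin.ext
      simp only [Fin.val_mk]
      congr 1
      omega
  · have hj : (j : ℕ) + 1 = L := by omega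
    have hcast : (j.succ : Fin (L + 1)) = Fin.last L := by
      apply Fin.ext
      simp [hj]
    rw [hcast, Fin.snoc_last]
    show y ⟨k, hk⟩ = mixw q L hL x y (k + 1) j
    unfold mixw
    rw [dif_neg (by omega : ¬ ((j : ℕ) + (k + 1) < L))]
    congr 1
    apply Fin.ext
    simp only
    have : (j : ℕ) + (k + 1) - L = k := by omega
    rw [this, Nat.mod_eq_of_lt hk]

lemma mixw_wt (hL : 0 < L) (x y : Fin L → Fin q) {k : ℕ} (hk : k ≤ L) :
    wtq q L qs (mixw q L hL x y k) + pwt q L qs x k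
      = wtq q L qs x + pwt q L qs y k := by
  induction k with
  | zero => rw [mixw_zero, pwt_zero, pwt_zero]
  | succ k ih =>
      have hkL : k < L := by omega
      have ih' := ih (by omega)
      -- decompose the snoc word in two ways
      set z : Fin (L + 1) → Fin q := Fin.snoc (mixw q L hL x y k) (y ⟨k, hkL⟩) with hz
      have h1 : wtq q (L + 1) qs z = wtq q L qs (mixw q L hL x y k) + hvn q qs (y ⟨k, hkL⟩) :=
        wtq_snoc _ _
      have h2 : wtq q (L + 1) qs z = hvn q qs (z 0) + wtq q L qs (suf q L z) := by
        conv_lhs => rw [← cons_head_suf z]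
        exact wtq_cons _ _
      have h3 : suf q L z = mixw q L hL x y (k + 1) := mixw_suf hL x y hkL
      have h4 : z 0 = x ⟨k, hkL⟩ := by
        have hcast : (0 : Fin (L + 1)) = ((⟨0, hL⟩ : Fin L)).castSucc := by
          apply Fin.ext; simp
        rw [hz, hcast, Fin.snoc_castSucc]
        show mixw q L hL x y k ⟨0, hL⟩ = x ⟨k, hkL⟩
        unfold mixw
        rw [dif_pos (by simpa using hkL)]
        congr 1
        exact Fin.ext (by simp)
      rw [h3] at h2
      rw [h4] at h2
      have h5 := pwt_succ (qs := qs) x hkL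
      have h6 := pwt_succ (qs := qs) y hkL
      omega

/-- Feeding the word `y` symbol-by-symbol after the node `x`. -/
lemma feed (hL : 0 < L) (x y : Fin L → Fin q)
    (H : ∀ k, k < L → w₁ ≤ swt q L qs x k + pwt q L qs y (k + 1)
        ∧ swt q L qs x k + pwt q L qs y (k + 1) ≤ w₂) :
    Relation.ReflTransGen (step q L (Sgram q L qs w₁ w₂)) x y := by
  have main : ∀ k, k ≤ L → Relation.ReflTransGen (step q L (Sgram q L qs w₁ w₂)) x
      (mixw q L hL x y k) := by
    intro k
    induction k with
    | zero => intro _; rw [mixw_zero]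
    | succ k ih =>
        intro hk1
        have hkL : k < L := by omega
        refine Relation.ReflTransGen.tail (ih (by omega)) ?_
        refine ⟨Fin.snoc (mixw q L hL x y k) (y ⟨k, hkL⟩), ?_, pre_snoc _ _, mixw_suf hL x y hkL⟩
        have h1 : wtq q (L + 1) qs (Fin.snoc (mixw q L hL x y k) (y ⟨k, hkL⟩))
            = wtq q L qs (mixw q L hL x y k) + hvn q qs (y ⟨k, hkL⟩) := wtq_snoc _ _
        have h2 := mixw_wt (qs := qs) hL x y (le_of_lt hkL)
        have h3 := pwt_add_swt (qs := qs) x k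
        have h4 := pwt_succ (qs := qs) y hkL
        have h5 := H k hkL
        simp only [Sgram, Finset.mem_filter, Finset.mem_univ, true_and]
        omega
  have := main L le_rfl
  rwa [mixw_L] at this

end MixLemmas

/-! ### Profiles for the connectivity walk -/

/-- Profile adapted to leaving the node `a`. -/
def prof1 (q L qs w₁ : ℕ) (a : Fin L → Fin q) : ℕ → ℕ :=
  fun k => min k (w₁ - swt q L qs a k)

/-- Morphing (by delay) from `prof1` to the rear ramp. -/
def profdn (q L qs w₁ : ℕ) (a : Fin L → Fin q) (s : ℕ) : ℕ → ℕ :=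
  fun k => max (k - (L - w₁)) (prof1 q L qs w₁ a (k - s))

/-- Cyclic-rotation bridge from the rear ramp to the front ramp. -/
def profbr (L w₁ s : ℕ) : ℕ → ℕ :=
  fun k => min k s + (k - (L - w₁ + s))

/-- Extended prefix-weight profile of the target `b`. -/
def proftt (q L qs : ℕ) (b : Fin L → Fin q) : ℕ → ℕ :=
  fun j => pwt q L qs b (min j L) + (j - L)

/-- Morphing down (by advance) towards the target-adapted profile. -/
def profgd (q L qs w₁ : ℕ) (b : Fin L → Fin q) (s : ℕ) : ℕ → ℕ :=
  fun k => min (min w₁ k) (proftt q L qs b (k + s))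

section WdLemmas

variable {q L qs w₁ w₂ : ℕ}

lemma swt_le_rem (x : Fin L → Fin q) (k : ℕ) : swt q L qs x k ≤ L - k := by
  unfold swt
  calc ∑ i ∈ Finset.univ.filter (fun i : Fin L => k ≤ (i : ℕ)), hvn q qs (x i)
      ≤ ∑ _i ∈ Finset.univ.filter (fun i : Fin L => k ≤ (i : ℕ)), 1 :=
        Finset.sum_le_sum (fun i _ => hvn_le _)
    _ = (Finset.univ.filter (fun i : Fin L => k ≤ (i : ℕ))).card := by simp
    _ ≤ (Finset.range (L - k)).card :=
        Finset.card_le_card_of_injOn (fun i => (i : ℕ) - k)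
          (fun i hi => by
            simp only [Finset.mem_coe, Finset.mem_filter] at hi
            simp only [Finset.mem_coe, Finset.mem_range]
            have := i.isLt
            omega)
          (fun i hi j hj h => by
            simp only [Finset.coe_filter, Set.mem_setOf_eq, Finset.mem_univ, true_and] at hi hj
            apply Fin.ext
            have h' : (i : ℕ) - k = (j : ℕ) - k := h
            omega)
    _ = L - k := Finset.card_range _

lemma Wd_congr (hq : 0 < q) (f g : ℕ → ℕ) (h : ∀ k, k ≤ L → f k = g k) :
    Wd q L hq f = Wd q L hq g := by
  funext i
  unfold Wd
  rw [h _ (by omega : (i : ℕ) + 1 ≤ L), h _ (by omega : (i : ℕ) ≤ L)]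

lemma hvn_top (hq : 0 < q) (hqs1 : 1 ≤ qs) : hvn q qs (q - 1) = 1 := by
  unfold hvn
  rw [if_pos (by omega)]

lemma hvn_bot (hq2 : qs + 1 ≤ q) : hvn q qs 0 = 0 := by
  unfold hvn
  rw [if_neg (by omega)]

/-- A profile is valid if it starts at `0` and has unit steps. -/
def OKP (f : ℕ → ℕ) : Prop := f 0 = 0 ∧ ∀ k, f k ≤ f (k + 1) ∧ f (k + 1) ≤ f k + 1

lemma pwt_Wd (hq : 0 < q) (hq2 : qs + 1 ≤ q) (hqs1 : 1 ≤ qs) (f : ℕ → ℕ) (hf : OKP f) :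
    ∀ k, k ≤ L → pwt q L qs (Wd q L hq f) k = f k := by
  intro k
  induction k with
  | zero => intro _; rw [pwt_zero, hf.1]
  | succ k ih =>
      intro hk
      have hkL : k < L := by omega
      rw [pwt_succ _ hkL, ih (by omega)]
      have hW : Wd q L hq f ⟨k, hkL⟩
          = if f ((k : ℕ) + 1) = f k + 1 then (⟨q - 1, by omega⟩ : Fin q) else ⟨0, hq⟩ := rfl
      by_cases h : f (k + 1) = f k + 1
      · rw [hW, if_pos h]
        simp only [Fin.val_mk]
        rw [hvn_top hq hqs1]
        omega
      · rw [hW, if_neg h]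
        simp only [Fin.val_mk]
        rw [hvn_bot hq2]
        have := (hf.2 k)
        omega

lemma swt_Wd (hq : 0 < q) (hq2 : qs + 1 ≤ q) (hqs1 : 1 ≤ qs) (f : ℕ → ℕ) (hf : OKP f) :
    ∀ k, k ≤ L → swt q L qs (Wd q L hq f) k + f k = f L := by
  intro k hk
  have h1 := pwt_Wd (L := L) hq hq2 hqs1 f hf k hk
  have h2 := pwt_Wd (L := L) hq hq2 hqs1 f hf L le_rfl
  have h3 := pwt_add_swt (qs := qs) (Wd q L hq f) k
  have h4 := pwt_ge (qs := qs) (Wd q L hq f) (le_refl L)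
  omega

/-- Feeding between two profile words: sufficient seam condition. -/
lemma seam (hL : 0 < L) (hq : 0 < q) (hq2 : qs + 1 ≤ q) (hqs1 : 1 ≤ qs)
    (f g : ℕ → ℕ) (hf : OKP f) (hg : OKP g) (hfL : f L = w₁)
    (hcond : ∀ k, k < L → f k ≤ g (k + 1) ∧ g (k + 1) ≤ f k + (w₂ - w₁)) (hw : w₁ ≤ w₂) :
    Relation.ReflTransGen (step q L (Sgram q L qs w₁ w₂)) (Wd q L hq f) (Wd q L hq g) := by
  apply feed hL
  intro k hk
  have h1 := swt_Wd (L := L) hq hq2 hqs1 f hf k (le_of_lt hk)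
  have h2 := pwt_Wd (L := L) hq hq2 hqs1 g hg (k + 1) (by omega)
  have h3 := hcond k hk
  rw [h2]
  omega

end WdLemmas

section Connect

variable {q L qs w₁ w₂ : ℕ}

lemma connect (hqs1 : 1 ≤ qs) (hqs2 : qs ≤ q - 1) (hw1 : 1 ≤ w₁) (hw12 : w₁ < w₂)
    (hw2 : w₂ ≤ L + 1) (a b : Fin L → Fin q)
    (ha1 : w₁ ≤ wtq q L qs a + 1) (ha2 : wtq q L qs a ≤ w₂)
    (hb1 : w₁ ≤ wtq q L qs b + 1) (hb2 : wtq q L qs b ≤ w₂) :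
    Relation.ReflTransGen (step q L (Sgram q L qs w₁ w₂)) a b := by
  have hq : 0 < q := by omega
  have hq2 : qs + 1 ≤ q := by omega
  have hL : 0 < L := by omega
  have hw₁L : w₁ ≤ L := by omega
  -- facts about a
  have hσ : ∀ k, swt q L qs a (k + 1) ≤ swt q L qs a k
      ∧ swt q L qs a k ≤ swt q L qs a (k + 1) + 1 := fun k => swt_step a k
  have hσX : ∀ k, pwt q L qs a k + swt q L qs a k = wtq q L qs a :=
    fun k => pwt_add_swt a k
  have hξ : ∀ k, pwt q L qs a k ≤ k := fun k => pwt_le a k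
  have hσL : swt q L qs a L = 0 := swt_ge a le_rfl
  have hσrem : ∀ k, swt q L qs a k ≤ L - k := fun k => swt_le_rem a k
  -- facts about b
  have ht : ∀ k, pwt q L qs b k ≤ pwt q L qs b (k + 1)
      ∧ pwt q L qs b (k + 1) ≤ pwt q L qs b k + 1 := fun k => pwt_step b k
  have htle : ∀ k, pwt q L qs b k ≤ k := fun k => pwt_le b k
  have htwt : ∀ k, pwt q L qs b k ≤ wtq q L qs b := by
    intro k
    have := pwt_add_swt (qs := qs) b k
    omega
  have htL : pwt q L qs b L = wtq q L qs b := pwt_ge b le_rfl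
  -- profile prof1
  have hf1u : ∀ k, prof1 q L qs w₁ a k = min k (w₁ - swt q L qs a k) := fun _ => rfl
  have hf1ok : OKP (prof1 q L qs w₁ a) := by
    constructor
    · rw [hf1u]; omega
    · intro k
      rw [hf1u, hf1u]
      have := hσ k
      omega
  have hf1L : prof1 q L qs w₁ a L = w₁ := by
    rw [hf1u, hσL]
    omega
  have hf1w : ∀ k, prof1 q L qs w₁ a k ≤ w₁ := by
    intro k
    rw [hf1u]
    omega
  have hf1R : ∀ k, k ≤ L → k - (L - w₁) ≤ prof1 q L qs w₁ a k := by
    intro k hk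
    rw [hf1u]
    have := hσrem k
    omega
  -- profile profdn
  have hdnu : ∀ s k, profdn q L qs w₁ a s k
      = max (k - (L - w₁)) (prof1 q L qs w₁ a (k - s)) := fun _ _ => rfl
  have hdnok : ∀ s, OKP (profdn q L qs w₁ a s) := by
    intro s
    constructor
    · rw [hdnu]
      have h0 : 0 - s = 0 := by omega
      rw [h0, hf1ok.1]
      omega
    · intro k
      rw [hdnu, hdnu]
      rcases le_or_gt s k with h | h
      · have hr : k + 1 - s = (k - s) + 1 := by omega
        rw [hr]
        have := hf1ok.2 (k - s)
        omega
      · have h1 : k - s = 0 := by omega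
        have h2 : k + 1 - s = 0 ∨ k + 1 - s = 1 := by omega
        rcases h2 with h2 | h2 <;> rw [h1, h2]
        · omega
        · have := hf1ok.2 0
          omega
  have hdnL : ∀ s, profdn q L qs w₁ a s L = w₁ := by
    intro s
    rw [hdnu]
    have := hf1w (L - s)
    omega
  -- profile profbr
  have hbru : ∀ s k, profbr L w₁ s k = min k s + (k - (L - w₁ + s)) := fun _ _ => rfl
  have hbrok : ∀ s, OKP (profbr L w₁ s) := by
    intro s
    constructor
    · rw [hbru]; omega
    · intro k
      rw [hbru, hbru]
      omega
  have hbrL : ∀ s, s ≤ w₁ → profbr L w₁ s L = w₁ := by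
    intro s hs
    rw [hbru]
    omega
  -- profile proftt and profgd
  have httu : ∀ j, proftt q L qs b j = pwt q L qs b (min j L) + (j - L) := fun _ => rfl
  have htts : ∀ j, proftt q L qs b j ≤ proftt q L qs b (j + 1)
      ∧ proftt q L qs b (j + 1) ≤ proftt q L qs b j + 1 := by
    intro j
    rw [httu, httu]
    rcases Nat.lt_or_ge j L with h | h
    · have h1 : min j L = j := by omega
      have h2 : min (j + 1) L = j + 1 := by omega
      rw [h1, h2]
      have := ht j
      omega
    · have h1 : min j L = L := by omega
      have h2 : min (j + 1) L = L := by omega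
      rw [h1, h2]
      omega
  have httbig : ∀ j, L < j → w₁ ≤ proftt q L qs b j := by
    intro j hj
    rw [httu]
    have h1 : min j L = L := by omega
    rw [h1, htL]
    omega
  have htteq : ∀ j, j ≤ L → proftt q L qs b j = pwt q L qs b j := by
    intro j hj
    rw [httu]
    have h1 : min j L = j := by omega
    rw [h1]
    omega
  have hgdu : ∀ s k, profgd q L qs w₁ b s k
      = min (min w₁ k) (proftt q L qs b (k + s)) := fun _ _ => rfl
  have hgdok : ∀ s, OKP (profgd q L qs w₁ b s) := by
    intro s
    constructor
    · rw [hgdu]; omega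
    · intro k
      rw [hgdu, hgdu]
      have := htts (k + s)
      have hrw : k + 1 + s = k + s + 1 := by omega
      rw [hrw]
      omega
  have hgdL : ∀ s, 1 ≤ s → profgd q L qs w₁ b s L = w₁ := by
    intro s hs
    rw [hgdu]
    have := httbig (L + s) (by omega)
    omega
  -- Step 1 : from a to Wd (prof1)
  have step1 : Relation.ReflTransGen (step q L (Sgram q L qs w₁ w₂)) a
      (Wd q L hq (prof1 q L qs w₁ a)) := by
    apply feed hL
    intro k hk
    have h2 := pwt_Wd (L := L) hq hq2 hqs1 _ hf1ok (k + 1) (by omega)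
    rw [h2, hf1u]
    have h3 := hσ k
    have h4 := hσX k
    have h5 := hσX (k + 1)
    have h6 := hξ k
    have h7 := hξ (k + 1)
    omega
  -- Step 2 : morph by delay to the rear ramp
  have step2 : ∀ s, Relation.ReflTransGen (step q L (Sgram q L qs w₁ w₂)) a
      (Wd q L hq (profdn q L qs w₁ a s)) := by
    intro s
    induction s with
    | zero =>
        have heq : Wd q L hq (profdn q L qs w₁ a 0) = Wd q L hq (prof1 q L qs w₁ a) := by
          apply Wd_congr
          intro k _
          rw [hdnu, Nat.sub_zero]
          have := hf1R k (by omega)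
          omega
        rw [heq]
        exact step1
    | succ s ih =>
        refine Relation.ReflTransGen.trans ih ?_
        apply seam hL hq hq2 hqs1 _ _ (hdnok s) (hdnok (s + 1)) (hdnL s) _ (by omega)
        intro k hk
        rw [hdnu, hdnu]
        have hrw : k + 1 - (s + 1) = k - s := by omega
        rw [hrw]
        omega
  -- Step 3 : switch to the bridge at s = L
  have step3 : Relation.ReflTransGen (step q L (Sgram q L qs w₁ w₂)) a
      (Wd q L hq (profbr L w₁ 0)) := by
    have heq : Wd q L hq (profdn q L qs w₁ a L) = Wd q L hq (profbr L w₁ 0) := by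
      apply Wd_congr
      intro k hk
      rw [hdnu, hbru]
      have h1 : k - L = 0 := by omega
      rw [h1, hf1ok.1]
      omega
    rw [← heq]
    exact step2 L
  -- Step 4 : rotate the rear ramp to the front ramp
  have step4 : ∀ s, s ≤ w₁ → Relation.ReflTransGen (step q L (Sgram q L qs w₁ w₂)) a
      (Wd q L hq (profbr L w₁ s)) := by
    intro s
    induction s with
    | zero => intro _; exact step3
    | succ s ih =>
        intro hs
        refine Relation.ReflTransGen.trans (ih (by omega)) ?_
        apply seam hL hq hq2 hqs1 _ _ (hbrok s) (hbrok (s + 1)) (hbrL s (by omega)) _ (by omega)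
        intro k hk
        rw [hbru, hbru]
        omega
  -- Step 5 : switch to the down profiles
  have step5 : Relation.ReflTransGen (step q L (Sgram q L qs w₁ w₂)) a
      (Wd q L hq (profgd q L qs w₁ b L)) := by
    have heq : Wd q L hq (profbr L w₁ w₁) = Wd q L hq (profgd q L qs w₁ b L) := by
      apply Wd_congr
      intro k hk
      rw [hbru, hgdu]
      rcases Nat.eq_zero_or_pos k with rfl | hk0
      · have := htteq L le_rfl
        have := htle L
        simp
      · have := httbig (k + L) (by omega)
        omega
    rw [← heq]
    exact step4 w₁ le_rfl
  -- Step 6 : morph down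
  have step6 : ∀ s, 1 ≤ s → s ≤ L → Relation.ReflTransGen (step q L (Sgram q L qs w₁ w₂))
      (Wd q L hq (profgd q L qs w₁ b s)) b := by
    intro s
    induction s with
    | zero => intro h; omega
    | succ s ih =>
        intro _ hsL
        rcases Nat.eq_zero_or_pos s with rfl | hs1
        · -- base : feed into b
          simp only [Nat.zero_add]
          apply feed hL
          intro k hk
          have h1 := swt_Wd (L := L) hq hq2 hqs1 _ (hgdok 1) k (le_of_lt hk)
          have h2 := hgdL 1 le_rfl
          have h3 := hgdu 1 k
          have h4 := htteq (k + 1) (by omega)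
          have h5 := htle (k + 1)
          have h6 := htwt (k + 1)
          rw [h3, h4] at h1
          omega
        · refine Relation.ReflTransGen.trans ?_ (ih hs1 (by omega))
          apply seam hL hq hq2 hqs1 _ _ (hgdok (s + 1)) (hgdok s) (hgdL (s + 1) (by omega))
            _ (by omega)
          intro k hk
          rw [hgdu, hgdu]
          have hrw : k + 1 + s = k + s + 1 := by omega
          have hrw2 : k + (s + 1) = k + s + 1 := by omega
          rw [hrw, hrw2]
          omega
  exact Relation.ReflTransGen.trans step5 (step6 L (by omega) le_rfl)

end Connect

section Glue

variable {q L qs w₁ w₂ : ℕ}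

lemma snoc_pre (z : Fin (L + 1) → Fin q) : Fin.snoc (pre q L z) (z (Fin.last L)) = z := by
  funext i
  cases i using Fin.lastCases with
  | last => simp [Fin.snoc_last]
  | cast j => simp [Fin.snoc_castSucc, pre]

lemma suf_cons (s : Fin q) (x : Fin L → Fin q) : suf q L (Fin.cons s x) = x := by
  funext i
  simp [suf, Fin.cons_succ]

lemma VS_bounds (a : Fin L → Fin q) (ha : a ∈ VS q L (Sgram q L qs w₁ w₂)) :
    w₁ ≤ wtq q L qs a + 1 ∧ wtq q L qs a ≤ w₂ := by
  rcases Finset.mem_union.mp ha with h | h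
  · obtain ⟨z, hz, rfl⟩ := Finset.mem_image.mp h
    have hz' : w₁ ≤ wtq q (L + 1) qs z ∧ wtq q (L + 1) qs z ≤ w₂ := by
      simpa [Sgram] using hz
    have hd : wtq q (L + 1) qs z
        = wtq q L qs (pre q L z) + hvn q qs (z (Fin.last L)) := by
      conv_lhs => rw [← snoc_pre z]
      exact wtq_snoc _ _
    have := hvn_le (q := q) (qs := qs) ((z (Fin.last L) : ℕ))
    omega
  · obtain ⟨z, hz, rfl⟩ := Finset.mem_image.mp h
    have hz' : w₁ ≤ wtq q (L + 1) qs z ∧ wtq q (L + 1) qs z ≤ w₂ := by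
      simpa [Sgram] using hz
    have hd : wtq q (L + 1) qs z
        = hvn q qs (z 0) + wtq q L qs (suf q L z) := by
      conv_lhs => rw [← cons_head_suf z]
      exact wtq_cons _ _
    have := hvn_le (q := q) (qs := qs) ((z 0 : ℕ))
    omega

lemma bal_deg (w : Fin L → Fin q) :
    ((Sgram q L qs w₁ w₂).filter (fun e => pre q L e = w)).card
      = ((Sgram q L qs w₁ w₂).filter (fun e => suf q L e = w)).card := by
  refine Finset.card_bij'
    (fun (z : Fin (L + 1) → Fin q) _ => (Fin.cons (z (Fin.last L)) w : Fin (L + 1) → Fin q))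
    (fun (z : Fin (L + 1) → Fin q) _ => (Fin.snoc w (z 0) : Fin (L + 1) → Fin q))
    ?_ ?_ ?_ ?_
  · intro z hz
    obtain ⟨hzS, hzw⟩ := Finset.mem_filter.mp hz
    have h1 : wtq q (L + 1) qs z = wtq q L qs w + hvn q qs (z (Fin.last L)) := by
      conv_lhs => rw [← snoc_pre z]
      rw [hzw]
      exact wtq_snoc _ _
    have h2 : wtq q (L + 1) qs (Fin.cons (z (Fin.last L)) w)
        = hvn q qs (z (Fin.last L)) + wtq q L qs w := wtq_cons _ _
    refine Finset.mem_filter.mpr ⟨?_, suf_cons _ _⟩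
    have hzS' : w₁ ≤ wtq q (L + 1) qs z ∧ wtq q (L + 1) qs z ≤ w₂ := by
      simpa [Sgram] using hzS
    simp only [Sgram, Finset.mem_filter, Finset.mem_univ, true_and]
    omega
  · intro z hz
    obtain ⟨hzS, hzw⟩ := Finset.mem_filter.mp hz
    have h1 : wtq q (L + 1) qs z = hvn q qs (z 0) + wtq q L qs w := by
      conv_lhs => rw [← cons_head_suf z]
      rw [hzw]
      exact wtq_cons _ _
    have h2 : wtq q (L + 1) qs (Fin.snoc w (z 0))
        = wtq q L qs w + hvn q qs (z 0) := wtq_snoc _ _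
    refine Finset.mem_filter.mpr ⟨?_, pre_snoc _ _⟩
    have hzS' : w₁ ≤ wtq q (L + 1) qs z ∧ wtq q (L + 1) qs z ≤ w₂ := by
      simpa [Sgram] using hzS
    simp only [Sgram, Finset.mem_filter, Finset.mem_univ, true_and]
    omega
  · intro z hz
    obtain ⟨-, hzw⟩ := Finset.mem_filter.mp hz
    simp only [Fin.cons_zero]
    rw [← hzw]
    exact snoc_pre z
  · intro z hz
    obtain ⟨-, hzw⟩ := Finset.mem_filter.mp hz
    simp only [Fin.snoc_last]
    rw [← hzw]
    exact cons_head_suf z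

end Glue


/-- The weight-restricted de Bruijn graph `D(q, ℓ; q*, [w₁, w₂])` is strongly
connected, and hence Eulerian: there is a closed walk traversing every arc
exactly once. -/
theorem restricted_deBruijn_eulerian (q L qs w₁ w₂ : ℕ)
    (hqs1 : 1 ≤ qs) (hqs2 : qs ≤ q - 1)
    (hw1 : 1 ≤ w₁) (hw12 : w₁ < w₂) (hw2 : w₂ ≤ L + 1) :
    (∀ a ∈ VS q L (Sgram q L qs w₁ w₂), ∀ b ∈ VS q L (Sgram q L qs w₁ w₂),
      Relation.ReflTransGen (step q L (Sgram q L qs w₁ w₂)) a b) ∧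
    ∃ c : List (Fin (L + 1) → Fin q),
      (∀ z, z ∈ c ↔ z ∈ Sgram q L qs w₁ w₂) ∧ c.Nodup ∧
      List.Chain' (fun a b => suf q L a = pre q L b) c ∧
      ∀ h : c ≠ [], suf q L (c.getLast h) = pre q L (c.head h) := by

  have part1 : ∀ a ∈ VS q L (Sgram q L qs w₁ w₂), ∀ b ∈ VS q L (Sgram q L qs w₁ w₂),
      Relation.ReflTransGen (step q L (Sgram q L qs w₁ w₂)) a b := by
    intro a ha b hb
    have Ha := VS_bounds (w₁ := w₁) (w₂ := w₂) a ha
    have Hb := VS_bounds (w₁ := w₁) (w₂ := w₂) b hb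
    exact connect hqs1 hqs2 hw1 hw12 hw2 a b Ha.1 Ha.2 Hb.1 Hb.2
  refine ⟨part1, ?_⟩
  apply euler_main (pre q L) (suf q L) (Sgram q L qs w₁ w₂) (fun w => bal_deg w)
  intro e he f hf
  have h1 : suf q L e ∈ VS q L (Sgram q L qs w₁ w₂) :=
    Finset.mem_union_right _ (Finset.mem_image.mpr ⟨e, he, rfl⟩)
  have h2 : pre q L f ∈ VS q L (Sgram q L qs w₁ w₂) :=
    Finset.mem_union_left _ (Finset.mem_image.mpr ⟨f, hf, rfl⟩)
  exact part1 _ h1 _ h2
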